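/- arXiv:0901.1339 — 2 statements merged into one kernel-verified Lean document; each statement's English description precedes it below -/
import Mathlib

section
/- Regard the n-fold tensor power L^{⊗n} of the Schrödinger-Virasoro algebra L as an L-module under the adjoint diagonal action. If r ∈ L^{⊗n} satisfies x·r = 0 for all x ∈ L, then r ∈ F·(M_0 ⊗ ⋯ ⊗ M_0) (i.e., r is a scalar multiple of M_0^{⊗n}). -/
open TensorProduct

/-- Index set for the basis of the Schrödinger–Virasoro algebra:
`Sum.inl n ↔ L_n`, `Sum.inr (Sum.inl n) ↔ Y_{n+1/2}`, `Sum.inr (Sum.inr n) ↔ M_n`. -/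
abbrev SVIx : Type := ℤ ⊕ ℤ ⊕ ℤ

variable (F : Type) [Field F] [CharZero F]

/-- Underlying space of the Schrödinger–Virasoro algebra: the free `F`-module on `SVIx`. -/
abbrev SVL := SVIx →₀ F

noncomputable def Lb (n : ℤ) : SVL F := Finsupp.single (Sum.inl n) 1
noncomputable def Yb (n : ℤ) : SVL F := Finsupp.single (Sum.inr (Sum.inl n)) 1
noncomputable def Mb (n : ℤ) : SVL F := Finsupp.single (Sum.inr (Sum.inr n)) 1

/-- The bracket of basis vectors.  Here `Yb n` stands for `Y_{n+1/2}`, so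
`[L_m, Y_{n+1/2}] = ((n+1/2) - m/2) Y_{m+n+1/2}` and
`[Y_{a+1/2}, Y_{b+1/2}] = (b-a) M_{a+b+1}`; all other brackets vanish. -/
noncomputable def brIx : SVIx → SVIx → SVL F
  | Sum.inl m, Sum.inl n => ((n - m : ℤ) : F) • Lb F (m + n)
  | Sum.inl m, Sum.inr (Sum.inl n) => (((2*n + 1 - m : ℤ) : F) / 2) • Yb F (m + n)
  | Sum.inl m, Sum.inr (Sum.inr n) => ((n : ℤ) : F) • Mb F (m + n)
  | Sum.inr (Sum.inl n), Sum.inl m => -((((2*n + 1 - m : ℤ) : F) / 2) • Yb F (m + n))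
  | Sum.inr (Sum.inl a), Sum.inr (Sum.inl b) => ((b - a : ℤ) : F) • Mb F (a + b + 1)
  | Sum.inr (Sum.inr n), Sum.inl m => -(((n : ℤ) : F) • Mb F (m + n))
  | _, _ => 0

/-- The bracket of the Schrödinger–Virasoro algebra: the bilinear extension of `brIx`. -/
noncomputable def bk : SVL F →ₗ[F] SVL F →ₗ[F] SVL F :=
  Finsupp.lsum F fun i => LinearMap.toSpanSingleton F (SVL F →ₗ[F] SVL F)
    (Finsupp.lsum F fun j => LinearMap.toSpanSingleton F (SVL F) (brIx F i j))

abbrev VV := SVL F ⊗[F] SVL F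

noncomputable instance : AddCommGroup (VV F) := inferInstance

noncomputable instance : Zero (VV F) :=
  (inferInstance : AddCommMonoid (VV F)).toAddMonoid.toZero

/-- The adjoint diagonal action of `L` on `L ⊗ L`, as a bilinear map:
`x · (a ⊗ b) = [x,a] ⊗ b + a ⊗ [x,b]`. -/
noncomputable def adVb : SVL F →ₗ[F] VV F →ₗ[F] VV F :=
  ((LinearMap.rTensorHom (SVL F) : (SVL F →ₗ[F] SVL F) →ₗ[F] (VV F →ₗ[F] VV F)) ∘ₗ bk F)
    + ((LinearMap.lTensorHom (SVL F) : (SVL F →ₗ[F] SVL F) →ₗ[F] (VV F →ₗ[F] VV F)) ∘ₗ bk F)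

/-- The twist map `τ(x ⊗ y) = y ⊗ x`. -/
noncomputable def tau : VV F →ₗ[F] VV F := (TensorProduct.comm F (SVL F) (SVL F)).toLinearMap

/-- The map `1 - τ`. -/
noncomputable def oneMinusTau : VV F →ₗ[F] VV F where
  toFun v := v - tau F v
  map_add' x y := by
    simp only [map_add]; exact sub_add_sub_comm x (tau F x) y (tau F y) ▸ rfl
  map_smul' c x := by simp only [map_smul, RingHom.id_apply, smul_sub]

/-- `Im (1 - τ) ⊂ L ⊗ L`. -/
noncomputable def skewIm : Submodule F (VV F) := LinearMap.range (oneMinusTau F)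

open scoped TensorProduct

noncomputable instance (n : ℕ) : Zero (⨂[F] _ : Fin n, SVL F) :=
  (inferInstance : AddCommMonoid (⨂[F] _ : Fin n, SVL F)).toAddMonoid.toZero

/-- The adjoint diagonal action of `x ∈ L` on the `n`-fold tensor power `L^{⊗n}`. -/
noncomputable def adTn (n : ℕ) (x : SVL F) :
    (⨂[F] _ : Fin n, SVL F) →ₗ[F] (⨂[F] _ : Fin n, SVL F) :=
  ∑ i : Fin n, PiTensorProduct.map (fun j => if j = i then bk F x else LinearMap.id)

set_option linter.unusedSectionVars false

-- scalar and target index of the bracket of basis vectors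
def tgtIx : SVIx → SVIx → SVIx
  | Sum.inl m, Sum.inl n => Sum.inl (m + n)
  | Sum.inl m, Sum.inr (Sum.inl n) => Sum.inr (Sum.inl (m + n))
  | Sum.inl m, Sum.inr (Sum.inr n) => Sum.inr (Sum.inr (m + n))
  | Sum.inr (Sum.inl n), Sum.inl m => Sum.inr (Sum.inl (m + n))
  | Sum.inr (Sum.inl a), Sum.inr (Sum.inl b) => Sum.inr (Sum.inr (a + b + 1))
  | Sum.inr (Sum.inr n), Sum.inl m => Sum.inr (Sum.inr (m + n))
  | _, j => j

noncomputable def scal : SVIx → SVIx → F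
  | Sum.inl m, Sum.inl n => ((n - m : ℤ) : F)
  | Sum.inl m, Sum.inr (Sum.inl n) => (((2*n + 1 - m : ℤ) : F) / 2)
  | Sum.inl _, Sum.inr (Sum.inr n) => ((n : ℤ) : F)
  | Sum.inr (Sum.inl n), Sum.inl m => -((((2*n + 1 - m : ℤ) : F) / 2))
  | Sum.inr (Sum.inl a), Sum.inr (Sum.inl b) => ((b - a : ℤ) : F)
  | Sum.inr (Sum.inr n), Sum.inl _ => -((n : ℤ) : F)
  | _, _ => 0

lemma brIx_eq (i j : SVIx) :
    brIx F i j = scal F i j • Finsupp.single (tgtIx i j) (1 : F) := by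
  rcases i with m | m | m <;> rcases j with p | p | p <;>
    simp [brIx, scal, tgtIx, Lb, Yb, Mb, neg_smul, zero_smul]

lemma bk_single (i j : SVIx) :
    bk F (Finsupp.single i 1) (Finsupp.single j 1) = brIx F i j := by
  simp [bk, Finsupp.lsum_single, LinearMap.toSpanSingleton_apply_one]
set_option linter.unusedSectionVars false

noncomputable def eB (n : ℕ) (σ : Fin n → SVIx) : ⨂[F] _ : Fin n, SVL F :=
  PiTensorProduct.tprod F fun i => Finsupp.single (σ i) (1 : F)

noncomputable def phi (n : ℕ) (σ : Fin n → SVIx) :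
    (⨂[F] _ : Fin n, SVL F) →ₗ[F] F :=
  PiTensorProduct.lift
    ((MultilinearMap.mkPiAlgebra F (Fin n) F).compLinearMap fun i => Finsupp.lapply (σ i))

lemma phi_eB (n : ℕ) (σ τ : Fin n → SVIx) :
    phi F n σ (eB F n τ) = if τ = σ then 1 else 0 := by
  classical
  simp only [phi, eB, PiTensorProduct.lift.tprod, MultilinearMap.compLinearMap_apply,
    MultilinearMap.mkPiAlgebra_apply, Finsupp.lapply_apply, Finsupp.single_apply]
  by_cases h : τ = σ
  · subst h; simp
  · obtain ⟨i, hi⟩ := Function.ne_iff.mp h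
    rw [if_neg h]
    exact Finset.prod_eq_zero (Finset.mem_univ i) (by simpa using hi)

lemma mem_span_eB (n : ℕ) (r : ⨂[F] _ : Fin n, SVL F) :
    r ∈ Submodule.span F (Set.range (eB F n)) := by
  classical
  have : (⊤ : Submodule F (⨂[F] _ : Fin n, SVL F)) ≤ Submodule.span F (Set.range (eB F n)) := by
    rw [← PiTensorProduct.span_tprod_eq_top, Submodule.span_le]
    rintro x ⟨v, rfl⟩
    have hv : ∀ i, v i = ∑ x ∈ (v i).support, (v i x) • Finsupp.single x (1 : F) := by
      intro i
      conv_lhs => rw [← Finsupp.sum_single (v i)]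
      rw [Finsupp.sum]
      exact Finset.sum_congr rfl fun x _ => by rw [Finsupp.smul_single, smul_eq_mul, mul_one]
    have := (PiTensorProduct.tprod F (s := fun _ : Fin n => SVL F)).map_sum_finset
      (fun i x => (v i x) • Finsupp.single x (1 : F)) (fun i => (v i).support)
    rw [show PiTensorProduct.tprod F v = PiTensorProduct.tprod F
        (fun i => ∑ x ∈ (v i).support, (v i x) • Finsupp.single x (1 : F)) by
        exact congrArg _ (funext hv), this]
    apply Submodule.sum_mem
    intro p hp
    rw [MultilinearMap.map_smul_univ]
    exact Submodule.smul_mem _ _ (Submodule.subset_span ⟨p, rfl⟩)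
  exact this Submodule.mem_top

lemma adTn_single_eB (n : ℕ) (i : SVIx) (σ : Fin n → SVIx) :
    adTn F n (Finsupp.single i 1) (eB F n σ)
      = ∑ j : Fin n, scal F i (σ j) • eB F n (Function.update σ j (tgtIx i (σ j))) := by
  classical
  rw [adTn, LinearMap.sum_apply]
  refine Finset.sum_congr rfl fun j _ => ?_
  rw [eB, PiTensorProduct.map_tprod]
  have h1 : (fun l => (if l = j then bk F (Finsupp.single i 1) else LinearMap.id)
        (Finsupp.single (σ l) (1 : F)))
      = Function.update (fun l => Finsupp.single (σ l) (1 : F)) j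
        (scal F i (σ j) • Finsupp.single (tgtIx i (σ j)) (1 : F)) := by
    funext l
    by_cases hl : l = j
    · subst hl
      simp [bk_single, brIx_eq]
    · simp [hl, Function.update_of_ne hl]
  rw [h1, MultilinearMap.map_update_smul]
  congr 1
  rw [eB]
  congr 1
  funext l
  by_cases hl : l = j
  · subst hl; simp
  · simp [hl, Function.update_of_ne hl]
lemma key (n : ℕ) (c : ((Fin n → SVIx)) →₀ F)
    (h : ∀ x : SVL F, adTn F n x (∑ σ ∈ c.support, c σ • eB F n σ) = 0)
    (i : SVIx) (σ' : Fin n → SVIx) :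
    ∑ σ ∈ c.support, ∑ j : Fin n,
      (if Function.update σ j (tgtIx i (σ j)) = σ' then c σ * scal F i (σ j) else 0) = 0 := by
  classical
  have h0 := congrArg (phi F n σ') (h (Finsupp.single i 1))
  simp only [map_sum, map_smul, adTn_single_eB, map_zero, phi_eB, smul_eq_mul,
    Finset.mul_sum, mul_ite, mul_one, mul_zero] at h0
  exact h0.trans ((phi F n σ').map_zero)
def idx : SVIx → ℤ := Sum.elim id (Sum.elim id id)

lemma claimA (n : ℕ) (c : (Fin n → SVIx) →₀ F)
    (hkey : ∀ (i : SVIx) (σ' : Fin n → SVIx), ∑ σ ∈ c.support, ∑ j : Fin n,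
      (if Function.update σ j (tgtIx i (σ j)) = σ' then c σ * scal F i (σ j) else 0) = 0)
    (N : ℤ) (hN : ∀ σ ∈ c.support, ∀ j : Fin n, idx (σ j) ≤ N) :
    ∀ σ₀ ∈ c.support, ∀ (j₀ : Fin n) (m₀ : ℤ), σ₀ j₀ ≠ Sum.inl m₀ := by
  classical
  intro σ₀ hσ₀ j₀ m₀ hbad
  set k : ℤ := N + 1 + |m₀| + |N| with hk
  have hk0 : 0 < k := by
    have := abs_nonneg m₀; have := neg_abs_le N; simp only [hk]; linarith
  have hbig : N < m₀ + k := by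
    have := neg_abs_le m₀; have := neg_abs_le N; have := abs_nonneg N
    simp only [hk]; linarith
  set i : SVIx := Sum.inr (Sum.inr k) with hi
  set σ' := Function.update σ₀ j₀ (Sum.inr (Sum.inr (m₀ + k))) with hσ'
  have vanish : ∀ σ ∈ c.support, ∀ j : Fin n, (σ ≠ σ₀ ∨ j ≠ j₀) →
      (if Function.update σ j (tgtIx i (σ j)) = σ' then c σ * scal F i (σ j) else 0) = 0 := by
    intro σ hσ j hne
    rcases hσj : σ j with m | b | m
    · rw [if_neg]
      intro hupd
      by_cases hj : j = j₀
      · subst hj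
        have hmm : m = m₀ := by
          have h2 := congrFun hupd j
          rw [Function.update_self, hσ', Function.update_self] at h2
          simp only [hi, tgtIx, Sum.inr.injEq] at h2
          omega
        have hss : σ = σ₀ := funext fun l => by
          by_cases hl : l = j
          · subst hl; rw [hσj, hbad, hmm]
          · have h2 := congrFun hupd l
            rwa [Function.update_of_ne hl, hσ', Function.update_of_ne hl] at h2
        rcases hne with h | h
        · exact h hss
        · exact h rfl
      · have h2 := congrFun hupd j₀
        rw [Function.update_of_ne (Ne.symm hj), hσ', Function.update_self] at h2
        have hle := hN σ hσ j₀
        rw [h2] at hle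
        simp only [idx, Sum.elim_inr, id_eq] at hle
        omega
    · have h0 : scal F i (Sum.inr (Sum.inl b)) = 0 := rfl
      rw [h0, mul_zero, ite_self]
    · have h0 : scal F i (Sum.inr (Sum.inr m)) = 0 := rfl
      rw [h0, mul_zero, ite_self]
  have hs := hkey i σ'
  rw [Finset.sum_eq_single_of_mem σ₀ hσ₀
    (fun σ hσ hne => Finset.sum_eq_zero fun j _ => vanish σ hσ j (Or.inl hne))] at hs
  rw [Finset.sum_eq_single_of_mem j₀ (Finset.mem_univ j₀)
    (fun j _ hne => vanish σ₀ hσ₀ j (Or.inr hne))] at hs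
  rw [hbad] at hs
  have hcond : Function.update σ₀ j₀ (tgtIx i (Sum.inl m₀)) = σ' := rfl
  rw [if_pos hcond] at hs
  have hsc : scal F i (Sum.inl m₀) = -(k : F) := rfl
  rw [hsc] at hs
  have hk0' : (k : F) ≠ 0 := Int.cast_ne_zero.mpr (by omega)
  have : c σ₀ = 0 := by
    rcases mul_eq_zero.mp hs with h | h
    · exact h
    · exact absurd h (by simpa using hk0')
  exact (Finsupp.mem_support_iff.mp hσ₀) this
lemma claimB (n : ℕ) (c : (Fin n → SVIx) →₀ F)
    (hkey : ∀ (i : SVIx) (σ' : Fin n → SVIx), ∑ σ ∈ c.support, ∑ j : Fin n,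
      (if Function.update σ j (tgtIx i (σ j)) = σ' then c σ * scal F i (σ j) else 0) = 0)
    (N : ℤ) (hN : ∀ σ ∈ c.support, ∀ j : Fin n, idx (σ j) ≤ N)
    (hA : ∀ σ ∈ c.support, ∀ (j : Fin n) (m : ℤ), σ j ≠ Sum.inl m) :
    ∀ σ₀ ∈ c.support, ∀ (j₀ : Fin n) (b₀ : ℤ), σ₀ j₀ ≠ Sum.inr (Sum.inl b₀) := by
  classical
  intro σ₀ hσ₀ j₀ b₀ hbad
  set a : ℤ := N + 1 + |b₀| + |N| with ha
  have hba : b₀ < a := by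
    have := neg_abs_le N; have := le_abs_self b₀; have := abs_nonneg N
    simp only [ha]; linarith
  have hbig : N < a + b₀ + 1 := by
    have := neg_abs_le b₀; have := abs_nonneg N
    simp only [ha]; linarith
  set i : SVIx := Sum.inr (Sum.inl a) with hi
  set σ' := Function.update σ₀ j₀ (Sum.inr (Sum.inr (a + b₀ + 1))) with hσ'
  have vanish : ∀ σ ∈ c.support, ∀ j : Fin n, (σ ≠ σ₀ ∨ j ≠ j₀) →
      (if Function.update σ j (tgtIx i (σ j)) = σ' then c σ * scal F i (σ j) else 0) = 0 := by
    intro σ hσ j hne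
    rcases hσj : σ j with m | b | m
    · exact absurd hσj (hA σ hσ j m)
    · rw [if_neg]
      intro hupd
      by_cases hj : j = j₀
      · subst hj
        have hmm : b = b₀ := by
          have h2 := congrFun hupd j
          rw [Function.update_self, hσ', Function.update_self] at h2
          simp only [hi, tgtIx, Sum.inr.injEq] at h2
          omega
        have hss : σ = σ₀ := funext fun l => by
          by_cases hl : l = j
          · subst hl; rw [hσj, hbad, hmm]
          · have h2 := congrFun hupd l
            rwa [Function.update_of_ne hl, hσ', Function.update_of_ne hl] at h2
        rcases hne with h | h
        · exact h hss
        · exact h rfl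
      · have h2 := congrFun hupd j₀
        rw [Function.update_of_ne (Ne.symm hj), hσ', Function.update_self] at h2
        have hle := hN σ hσ j₀
        rw [h2] at hle
        simp only [idx, Sum.elim_inr, id_eq] at hle
        omega
    · have h0 : scal F i (Sum.inr (Sum.inr m)) = 0 := rfl
      rw [h0, mul_zero, ite_self]
  have hs := hkey i σ'
  rw [Finset.sum_eq_single_of_mem σ₀ hσ₀
    (fun σ hσ hne => Finset.sum_eq_zero fun j _ => vanish σ hσ j (Or.inl hne))] at hs
  rw [Finset.sum_eq_single_of_mem j₀ (Finset.mem_univ j₀)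
    (fun j _ hne => vanish σ₀ hσ₀ j (Or.inr hne))] at hs
  rw [hbad] at hs
  have hcond : Function.update σ₀ j₀ (tgtIx i (Sum.inr (Sum.inl b₀))) = σ' := rfl
  rw [if_pos hcond] at hs
  have hsc : scal F i (Sum.inr (Sum.inl b₀)) = ((b₀ - a : ℤ) : F) := rfl
  rw [hsc] at hs
  have hk0' : ((b₀ - a : ℤ) : F) ≠ 0 := Int.cast_ne_zero.mpr (by omega)
  have : c σ₀ = 0 := by
    rcases mul_eq_zero.mp hs with h | h
    · exact h
    · exact absurd h hk0'
  exact (Finsupp.mem_support_iff.mp hσ₀) this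

lemma claimC (n : ℕ) (c : (Fin n → SVIx) →₀ F)
    (hkey : ∀ (i : SVIx) (σ' : Fin n → SVIx), ∑ σ ∈ c.support, ∑ j : Fin n,
      (if Function.update σ j (tgtIx i (σ j)) = σ' then c σ * scal F i (σ j) else 0) = 0)
    (N : ℤ) (hN : ∀ σ ∈ c.support, ∀ j : Fin n, idx (σ j) ≤ N)
    (hA : ∀ σ ∈ c.support, ∀ (j : Fin n) (m : ℤ), σ j ≠ Sum.inl m)
    (hB : ∀ σ ∈ c.support, ∀ (j : Fin n) (b : ℤ), σ j ≠ Sum.inr (Sum.inl b)) :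
    ∀ σ₀ ∈ c.support, ∀ (j₀ : Fin n) (m₀ : ℤ), σ₀ j₀ = Sum.inr (Sum.inr m₀) → m₀ = 0 := by
  classical
  intro σ₀ hσ₀ j₀ m₀ hbad
  by_contra hm₀
  set k : ℤ := N + 1 + |m₀| + |N| with hk
  have hbig : N < k + m₀ := by
    have := neg_abs_le m₀; have := abs_nonneg N
    simp only [hk]; linarith
  set i : SVIx := Sum.inl k with hi
  set σ' := Function.update σ₀ j₀ (Sum.inr (Sum.inr (k + m₀))) with hσ'
  have vanish : ∀ σ ∈ c.support, ∀ j : Fin n, (σ ≠ σ₀ ∨ j ≠ j₀) →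
      (if Function.update σ j (tgtIx i (σ j)) = σ' then c σ * scal F i (σ j) else 0) = 0 := by
    intro σ hσ j hne
    rcases hσj : σ j with m | b | m
    · exact absurd hσj (hA σ hσ j m)
    · exact absurd hσj (hB σ hσ j b)
    · rw [if_neg]
      intro hupd
      by_cases hj : j = j₀
      · subst hj
        have hmm : m = m₀ := by
          have h2 := congrFun hupd j
          rw [Function.update_self, hσ', Function.update_self] at h2
          simp only [hi, tgtIx, Sum.inr.injEq] at h2
          omega
        have hss : σ = σ₀ := funext fun l => by
          by_cases hl : l = j
          · subst hl; rw [hσj, hbad, hmm]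
          · have h2 := congrFun hupd l
            rwa [Function.update_of_ne hl, hσ', Function.update_of_ne hl] at h2
        rcases hne with h | h
        · exact h hss
        · exact h rfl
      · have h2 := congrFun hupd j₀
        rw [Function.update_of_ne (Ne.symm hj), hσ', Function.update_self] at h2
        have hle := hN σ hσ j₀
        rw [h2] at hle
        simp only [idx, Sum.elim_inr, id_eq] at hle
        omega
  have hs := hkey i σ'
  rw [Finset.sum_eq_single_of_mem σ₀ hσ₀
    (fun σ hσ hne => Finset.sum_eq_zero fun j _ => vanish σ hσ j (Or.inl hne))] at hs
  rw [Finset.sum_eq_single_of_mem j₀ (Finset.mem_univ j₀)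
    (fun j _ hne => vanish σ₀ hσ₀ j (Or.inr hne))] at hs
  rw [hbad] at hs
  have hcond : Function.update σ₀ j₀ (tgtIx i (Sum.inr (Sum.inr m₀))) = σ' := rfl
  rw [if_pos hcond] at hs
  have hsc : scal F i (Sum.inr (Sum.inr m₀)) = ((m₀ : ℤ) : F) := rfl
  rw [hsc] at hs
  have hk0' : ((m₀ : ℤ) : F) ≠ 0 := Int.cast_ne_zero.mpr hm₀
  have : c σ₀ = 0 := by
    rcases mul_eq_zero.mp hs with h | h
    · exact h
    · exact absurd h hk0'
  exact (Finsupp.mem_support_iff.mp hσ₀) this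

/-- Any invariant of the adjoint diagonal action of `L` on `L^{⊗n}` is a scalar
multiple of `M₀ ⊗ ⋯ ⊗ M₀`. -/
theorem sv_invariants_tensor_power (n : ℕ) (r : ⨂[F] _ : Fin n, SVL F)
    (h : ∀ x : SVL F, adTn F n x r = 0) :
    ∃ c : F, r = c • (PiTensorProduct.tprod F fun _ : Fin n => Mb F 0) := by
  classical
  obtain ⟨c, hc⟩ := Finsupp.mem_span_range_iff_exists_finsupp.mp (mem_span_eB F n r)
  have hr : r = ∑ σ ∈ c.support, c σ • eB F n σ := by rw [← hc]; rfl
  have hkey := key F n c (fun x => by rw [← hr]; exact h x)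
  set S : Finset ℤ :=
    insert 0 (c.support.biUnion fun σ => Finset.image (fun j => idx (σ j)) Finset.univ) with hS
  set N : ℤ := S.max' ⟨0, Finset.mem_insert_self 0 _⟩ with hNdef
  have hN : ∀ σ ∈ c.support, ∀ j : Fin n, idx (σ j) ≤ N := fun σ hσ j =>
    Finset.le_max' S _ (Finset.mem_insert_of_mem (Finset.mem_biUnion.mpr
      ⟨σ, hσ, Finset.mem_image.mpr ⟨j, Finset.mem_univ j, rfl⟩⟩))
  have hA := claimA F n c hkey N hN
  have hB := claimB F n c hkey N hN hA
  have hC := claimC F n c hkey N hN hA hB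
  have hsub : c.support ⊆ {fun _ : Fin n => Sum.inr (Sum.inr (0 : ℤ))} := by
    intro σ hσ
    rw [Finset.mem_singleton]
    funext j
    rcases hσj : σ j with m | b | m
    · exact absurd hσj (hA σ hσ j m)
    · exact absurd hσj (hB σ hσ j b)
    · rw [hC σ hσ j m hσj]
  refine ⟨c (fun _ => Sum.inr (Sum.inr 0)), ?_⟩
  rw [hr, Finset.sum_subset hsub
    (fun x _ hx => by rw [Finsupp.notMem_support_iff.mp hx, zero_smul]),
    Finset.sum_singleton]
  rfl
end

section
/- Let L be the Schrödinger-Virasoro algebra and D ∈ Der(L, L⊗L) a derivation homogeneous of degree 0. Then D(L_0) ∈ F·(M_0 ⊗ M_0). -/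
open TensorProduct

variable (F : Type) [Field F] [CharZero F]

/-- Values on basis elements of the special derivations `D` with parameters
`(α, α†, β, β†, γ, γ†)`:  `D(L_n) = (nα+γ) M₀⊗M_n + (nα†+γ†) M_n⊗M₀`,
`D(Y_{n+1/2}) = β M₀⊗Y_{n+1/2} + β† Y_{n+1/2}⊗M₀`, `D(M_n) = 2(β M₀⊗M_n + β† M_n⊗M₀)`. -/
noncomputable def dval (a a' b b' c c' : F) : SVIx → VV F
  | Sum.inl n => (((n : ℤ) : F) * a + c) • (Mb F 0 ⊗ₜ[F] Mb F n)
      + (((n : ℤ) : F) * a' + c') • (Mb F n ⊗ₜ[F] Mb F 0)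
  | Sum.inr (Sum.inl n) => b • (Mb F 0 ⊗ₜ[F] Yb F n) + b' • (Yb F n ⊗ₜ[F] Mb F 0)
  | Sum.inr (Sum.inr n) => (2 * b) • (Mb F 0 ⊗ₜ[F] Mb F n) + (2 * b') • (Mb F n ⊗ₜ[F] Mb F 0)

/-- The special derivation with parameters `(α, α†, β, β†, γ, γ†)`. -/
noncomputable def Dmap (a a' b b' c c' : F) : SVL F →ₗ[F] VV F :=
  Finsupp.lsum F fun i => LinearMap.toSpanSingleton F (VV F) (dval F a a' b b' c c' i)

/-- `D` is a derivation from `L` to the `L`-module `L ⊗ L`. -/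
def IsDer (D : SVL F →ₗ[F] VV F) : Prop :=
  ∀ x y : SVL F, D (bk F x y) = adVb F x (D y) - adVb F y (D x)

/-- Twice the degree of a basis element (so that everything is `ℤ`-valued):
`deg2 (L_n) = deg2 (M_n) = 2n` and `deg2 (Y_{n+1/2}) = 2n + 1`. -/
def deg2 : SVIx → ℤ
  | Sum.inl n => 2 * n
  | Sum.inr (Sum.inl n) => 2 * n + 1
  | Sum.inr (Sum.inr n) => 2 * n

/-- `L ⊗ L` is identified with the finitely supported functions on `SVIx × SVIx`. -/
noncomputable def toF2 : VV F ≃ₗ[F] (SVIx × SVIx →₀ F) := finsuppTensorFinsupp' F SVIx SVIx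

/-- The projection of `v ∈ L ⊗ L` onto its homogeneous component of (twice-)degree `d`. -/
noncomputable def projV (d : ℤ) (v : VV F) : VV F :=
  (toF2 F).symm (((toF2 F) v).filter (fun ij => deg2 ij.1 + deg2 ij.2 = d))

/-- `x ∈ L` is homogeneous of (twice-)degree `d`. -/
def homL (d : ℤ) (x : SVL F) : Prop := ∀ i ∈ x.support, deg2 i = d

/-- A derivation `D : L → L ⊗ L` is homogeneous of (twice-)degree `a`. -/
def homDer (a : ℤ) (D : SVL F →ₗ[F] VV F) : Prop :=
  ∀ (q : ℤ) (x : SVL F), homL F q x → projV F (q + a) (D x) = D x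


-- AUX START
set_option linter.unusedSectionVars false

noncomputable def eb (i : SVIx) : SVL F := Finsupp.single i 1

lemma bk_eb (i j : SVIx) : bk F (eb F i) (eb F j) = brIx F i j := by
  simp [bk, eb, Finsupp.lsum_single, LinearMap.toSpanSingleton_apply]

lemma adVb_tmul (x u v : SVL F) :
    adVb F x (u ⊗ₜ[F] v) = bk F x u ⊗ₜ[F] v + u ⊗ₜ[F] bk F x v := by
  simp [adVb, LinearMap.rTensorHom, LinearMap.lTensorHom]

lemma toF2_sum {α : Type} (c : α →₀ F) (g : α → F → VV F) :
    toF2 F (c.sum g) = c.sum fun a r => toF2 F (g a r) :=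
  map_finsuppSum ((toF2 F).toLinearMap) c g

lemma lin_sum {α : Type} (φ : VV F →ₗ[F] VV F) (c : α →₀ F) (g : α → F → VV F) :
    φ (c.sum g) = c.sum fun a r => φ (g a r) :=
  map_finsuppSum φ c g

lemma repr_eq (v : VV F) :
    v = ((toF2 F) v).sum fun pq r => r • (eb F pq.1 ⊗ₜ[F] eb F pq.2) := by
  apply (toF2 F).injective
  rw [toF2_sum F ((toF2 F) v) (fun pq r => r • (eb F pq.1 ⊗ₜ[F] eb F pq.2))]
  simp only [LinearEquiv.map_smul, toF2, eb, finsuppTensorFinsupp'_single_tmul_single, one_mul,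
    Finsupp.smul_single', mul_one]
  exact (Finsupp.sum_single _).symm

lemma fsum_eq_point {α : Type} (c : α →₀ F) (g : α → F → F) (a0 : α)
    (h : ∀ b, b ≠ a0 → g b (c b) = 0) (h0 : g a0 0 = 0) : c.sum g = g a0 (c a0) := by
  classical
  rw [Finsupp.sum]
  by_cases ha : a0 ∈ c.support
  · exact Finset.sum_eq_single_of_mem a0 ha fun b _ hb => h b hb
  · rw [Finsupp.notMem_support_iff.mp ha, h0]
    exact Finset.sum_eq_zero fun b hb => by
      rcases eq_or_ne b a0 with rfl | hne
      · exact absurd hb ha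
      · exact h b hne

lemma fsum_zero {α : Type} (c : α →₀ F) (g : α → F → F)
    (h : ∀ b, g b (c b) = 0) : c.sum g = 0 :=
  Finset.sum_eq_zero fun b _ => h b

lemma master (w : VV F) (i : SVIx) (h : adVb F (eb F i) w = 0) (p q : SVIx) :
    ((toF2 F w).sum fun ab r => r * ((brIx F i ab.1) p * (eb F ab.2) q))
      + ((toF2 F w).sum fun ab r => r * ((eb F ab.1) p * (brIx F i ab.2) q)) = 0 := by
  have expand : adVb F (eb F i) w
      = (toF2 F w).sum fun ab r =>
          r • (brIx F i ab.1 ⊗ₜ[F] eb F ab.2 + eb F ab.1 ⊗ₜ[F] brIx F i ab.2) := by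
    conv_lhs => rw [repr_eq F w]
    rw [lin_sum]
    refine Finsupp.sum_congr fun ab _ => ?_
    rw [map_smul, adVb_tmul, bk_eb, bk_eb]
  have h2 : (toF2 F (adVb F (eb F i) w)) (p, q) = 0 := by
    rw [h, show toF2 F (0 : VV F) = 0 from map_zero (toF2 F)]; rfl
  rw [expand, toF2_sum, Finsupp.sum_apply] at h2
  rw [← h2, ← Finsupp.sum_add]
  refine Finsupp.sum_congr fun ab _ => ?_
  rw [LinearEquiv.map_smul, LinearEquiv.map_add]
  simp only [toF2, finsuppTensorFinsupp'_apply_apply, Finsupp.smul_apply, Finsupp.add_apply,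
    smul_eq_mul, mul_add]

abbrev Li (n : ℤ) : SVIx := Sum.inl n
abbrev Yi (n : ℤ) : SVIx := Sum.inr (Sum.inl n)
abbrev Mi (n : ℤ) : SVIx := Sum.inr (Sum.inr n)

lemma brIx_MY (a b : ℤ) : brIx F (Mi a) (Yi b) = 0 := rfl
lemma brIx_MM (a b : ℤ) : brIx F (Mi a) (Mi b) = 0 := rfl
lemma brIx_YM (a b : ℤ) : brIx F (Yi a) (Mi b) = 0 := rfl

lemma eqLL (c : SVIx × SVIx →₀ F)
    (hm : ∀ i p q : SVIx, (c.sum fun ab r => r * ((brIx F i ab.1) p * (eb F ab.2) q))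
      + (c.sum fun ab r => r * ((eb F ab.1) p * (brIx F i ab.2) q)) = 0)
    (m n : ℤ) : c (Li m, Li n) = 0 := by
  have h := hm (Mi 1) (Mi (m+1)) (Li n)
  rw [fsum_eq_point F c _ (Li m, Li n) ?v1 (zero_mul _), fsum_zero F c _ ?v2] at h
  · simp only [brIx, eb, Mb, Lb, Finsupp.single_apply, Finsupp.neg_apply, Finsupp.smul_apply,
      smul_eq_mul, Finsupp.single_eq_same, if_true, add_zero, mul_one, one_mul, mul_neg,
      neg_mul, Int.cast_one] at h
    linear_combination -h
  case v1 =>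
    rintro ⟨a, b⟩ hne
    rcases a with x | x | x
    · simp only [brIx, eb, Lb, Mb, Finsupp.single_apply, Finsupp.neg_apply, Finsupp.smul_apply,
        smul_eq_mul, Int.cast_one, one_mul, Sum.inr.injEq, Sum.inl.injEq]
      split_ifs with h1 h2
      · exfalso
        apply hne
        obtain rfl : x = m := by omega
        rw [h2]
      · ring
      · ring
      · ring
    · simp only [brIx_MY, Finsupp.coe_zero, Pi.zero_apply, zero_mul, mul_zero]
    · simp only [brIx_MM, Finsupp.coe_zero, Pi.zero_apply, zero_mul, mul_zero]
  case v2 =>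
    rintro ⟨a, b⟩
    rcases b with x | x | x
    · simp only [brIx, eb, Lb, Mb, Yb, Finsupp.single_apply, Finsupp.neg_apply,
        Finsupp.smul_apply, smul_eq_mul, Int.cast_one, one_mul]
      simp only [reduceCtorEq, if_false, mul_zero, zero_mul, neg_zero]
    · simp only [brIx_MY, Finsupp.coe_zero, Pi.zero_apply, zero_mul, mul_zero]
    · simp only [brIx_MM, Finsupp.coe_zero, Pi.zero_apply, zero_mul, mul_zero]

lemma eqLM (c : SVIx × SVIx →₀ F)
    (hm : ∀ i p q : SVIx, (c.sum fun ab r => r * ((brIx F i ab.1) p * (eb F ab.2) q))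
      + (c.sum fun ab r => r * ((eb F ab.1) p * (brIx F i ab.2) q)) = 0)
    (k m n : ℤ) (hk : k ≠ 0) : c (Li m, Mi (n+k)) + c (Mi (m+k), Li n) = 0 := by
  have h := hm (Mi k) (Mi (m+k)) (Mi (n+k))
  rw [fsum_eq_point F c _ (Li m, Mi (n+k)) ?v1 (zero_mul _),
    fsum_eq_point F c _ (Mi (m+k), Li n) ?v2 (zero_mul _)] at h
  · simp only [brIx, eb, Mb, Lb, Finsupp.single_apply, Finsupp.neg_apply, Finsupp.smul_apply,
      smul_eq_mul, eq_self_iff_true, if_true, mul_one, one_mul, mul_neg, neg_mul] at h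
    have hkF : (k : F) ≠ 0 := Int.cast_ne_zero.mpr hk
    have h2 : -(k : F) * (c (Li m, Mi (n+k)) + c (Mi (m+k), Li n)) = 0 := by linear_combination h
    rcases mul_eq_zero.mp h2 with h3 | h3
    · exact absurd h3 (by simpa using hkF)
    · exact h3
  case v1 =>
    rintro ⟨a, b⟩ hne
    rcases a with x | x | x
    · simp only [brIx, eb, Lb, Mb, Finsupp.single_apply, Finsupp.neg_apply, Finsupp.smul_apply,
        smul_eq_mul, Sum.inr.injEq, Sum.inl.injEq]
      split_ifs with h1 h2
      · exfalso
        apply hne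
        obtain rfl : x = m := by omega
        rw [h2]
      · ring
      · ring
      · ring
    · simp only [brIx_MY, Finsupp.coe_zero, Pi.zero_apply, zero_mul, mul_zero]
    · simp only [brIx_MM, Finsupp.coe_zero, Pi.zero_apply, zero_mul, mul_zero]
  case v2 =>
    rintro ⟨a, b⟩ hne
    rcases b with x | x | x
    · simp only [brIx, eb, Lb, Mb, Finsupp.single_apply, Finsupp.neg_apply, Finsupp.smul_apply,
        smul_eq_mul, Sum.inr.injEq, Sum.inl.injEq]
      split_ifs with h1 h2
      · exfalso
        apply hne
        obtain rfl : x = n := by omega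
        rw [h1]
      · ring
      · ring
      · ring
    · simp only [brIx_MY, Finsupp.coe_zero, Pi.zero_apply, zero_mul, mul_zero]
    · simp only [brIx_MM, Finsupp.coe_zero, Pi.zero_apply, zero_mul, mul_zero]

lemma eqYY (c : SVIx × SVIx →₀ F)
    (hm : ∀ i p q : SVIx, (c.sum fun ab r => r * ((brIx F i ab.1) p * (eb F ab.2) q))
      + (c.sum fun ab r => r * ((eb F ab.1) p * (brIx F i ab.2) q)) = 0)
    (k a b : ℤ) :
    ((a - k : ℤ) : F) * c (Yi a, Yi (b+k)) - (((2*k + 1 - b : ℤ) : F)/2) * c (Mi (k+a+1), Li b) = 0 := by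
  have h := hm (Yi k) (Mi (k+a+1)) (Yi (b+k))
  rw [fsum_eq_point F c _ (Yi a, Yi (b+k)) ?v1 (zero_mul _),
    fsum_eq_point F c _ (Mi (k+a+1), Li b) ?v2 (zero_mul _)] at h
  · simp only [brIx, eb, Mb, Lb, Yb, Finsupp.single_apply, Finsupp.neg_apply, Finsupp.smul_apply,
      smul_eq_mul, eq_self_iff_true, if_true, mul_one, one_mul, mul_neg, neg_mul] at h
    linear_combination h
  case v1 =>
    rintro ⟨a', b'⟩ hne
    rcases a' with x | x | x
    · simp only [brIx, eb, Lb, Yb, Mb, Finsupp.single_apply, Finsupp.neg_apply,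
        Finsupp.smul_apply, smul_eq_mul, Sum.inr.injEq, reduceCtorEq, if_false, mul_zero,
        zero_mul, neg_zero]
    · simp only [brIx, eb, Yb, Mb, Finsupp.single_apply, Finsupp.smul_apply, smul_eq_mul,
        Sum.inr.injEq, Sum.inl.injEq]
      split_ifs with h1 h2
      · exfalso
        apply hne
        obtain rfl : x = a := by omega
        rw [h2]
      · ring
      · ring
      · ring
    · simp only [brIx_YM, Finsupp.coe_zero, Pi.zero_apply, zero_mul, mul_zero]
  case v2 =>
    rintro ⟨a', b'⟩ hne
    rcases b' with x | x | x
    · simp only [brIx, eb, Lb, Yb, Mb, Finsupp.single_apply, Finsupp.neg_apply,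
        Finsupp.smul_apply, smul_eq_mul, Sum.inr.injEq, Sum.inl.injEq]
      split_ifs with h1 h2
      · exfalso
        apply hne
        obtain rfl : x = b := by omega
        rw [h1]
      · ring
      · ring
      · ring
    · simp only [brIx, eb, Yb, Mb, Finsupp.single_apply, Finsupp.smul_apply, smul_eq_mul,
        Sum.inr.injEq, reduceCtorEq, if_false, mul_zero, zero_mul]
    · simp only [brIx_YM, Finsupp.coe_zero, Pi.zero_apply, zero_mul, mul_zero]

lemma eqMM (c : SVIx × SVIx →₀ F)
    (hm : ∀ i p q : SVIx, (c.sum fun ab r => r * ((brIx F i ab.1) p * (eb F ab.2) q))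
      + (c.sum fun ab r => r * ((eb F ab.1) p * (brIx F i ab.2) q)) = 0)
    (k a b : ℤ) :
    ((a : ℤ) : F) * c (Mi a, Mi (k+b)) + ((b : ℤ) : F) * c (Mi (k+a), Mi b) = 0 := by
  have h := hm (Li k) (Mi (k+a)) (Mi (k+b))
  rw [fsum_eq_point F c _ (Mi a, Mi (k+b)) ?v1 (zero_mul _),
    fsum_eq_point F c _ (Mi (k+a), Mi b) ?v2 (zero_mul _)] at h
  · simp only [brIx, eb, Mb, Finsupp.single_apply, Finsupp.smul_apply, smul_eq_mul,
      eq_self_iff_true, if_true, mul_one, one_mul] at h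
    linear_combination h
  case v1 =>
    rintro ⟨a', b'⟩ hne
    rcases a' with x | x | x
    · simp only [brIx, Lb, Finsupp.single_apply, Finsupp.smul_apply, smul_eq_mul,
        reduceCtorEq, if_false, mul_zero, zero_mul]
    · simp only [brIx, Yb, Finsupp.single_apply, Finsupp.smul_apply, smul_eq_mul,
        Sum.inr.injEq, reduceCtorEq, if_false, mul_zero, zero_mul]
    · simp only [brIx, eb, Mb, Finsupp.single_apply, Finsupp.smul_apply, smul_eq_mul,
        Sum.inr.injEq, Sum.inl.injEq]
      split_ifs with h1 h2
      · exfalso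
        apply hne
        obtain rfl : x = a := by omega
        rw [h2]
      · ring
      · ring
      · ring
  case v2 =>
    rintro ⟨a', b'⟩ hne
    rcases b' with x | x | x
    · simp only [brIx, Lb, Finsupp.single_apply, Finsupp.smul_apply, smul_eq_mul,
        reduceCtorEq, if_false, mul_zero, zero_mul]
    · simp only [brIx, Yb, Finsupp.single_apply, Finsupp.smul_apply, smul_eq_mul,
        Sum.inr.injEq, reduceCtorEq, if_false, mul_zero, zero_mul]
    · simp only [brIx, eb, Mb, Finsupp.single_apply, Finsupp.smul_apply, smul_eq_mul,
        Sum.inr.injEq, Sum.inl.injEq]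
      split_ifs with h1 h2
      · exfalso
        apply hne
        obtain rfl : x = b := by omega
        rw [h1]
      · ring
      · ring
      · ring


lemma finsupp_vanish {α : Type} (c : α →₀ F) (ι : ℤ → α) (hι : Function.Injective ι)
    (v : F) (h : ∀ k : ℤ, k ≠ 0 → c (ι k) = v) : v = 0 := by
  by_contra hv
  have hsub : ι '' {k : ℤ | k ≠ 0} ⊆ ↑c.support := by
    rintro x ⟨kk, hkk, rfl⟩
    simp only [Finset.mem_coe, Finsupp.mem_support_iff]
    rw [h kk hkk]
    exact hv
  have hinf : (ι '' {k : ℤ | k ≠ 0}).Infinite := by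
    refine Set.Infinite.image (Function.Injective.injOn hι) ?_
    have h0 : ({0}ᶜ : Set ℤ).Infinite := Set.Finite.infinite_compl (Set.finite_singleton 0)
    have h1 : ({0}ᶜ : Set ℤ) = {k : ℤ | k ≠ 0} := by
      ext x
      simp [Set.mem_compl_iff]
    rwa [h1] at h0
  exact hinf (Set.Finite.subset c.support.finite_toSet hsub)

lemma proj_support (d : ℤ) (v : VV F) (h : projV F d v = v) (pq : SVIx × SVIx)
    (hpq : ¬ (deg2 pq.1 + deg2 pq.2 = d)) : toF2 F v pq = 0 := by
  have h2 : ((toF2 F v).filter fun ij => deg2 ij.1 + deg2 ij.2 = d) = toF2 F v := by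
    have h3 := congrArg (toF2 F) h
    rwa [projV, LinearEquiv.apply_symm_apply] at h3
  rw [← h2]
  exact Finsupp.filter_apply_neg _ _ hpq

lemma bk_L0 (i : SVIx) : bk F (Lb F 0) (eb F i) = (((deg2 i : ℤ) : F)/2) • eb F i := by
  have hL : Lb F 0 = eb F (Li 0) := rfl
  rw [hL, bk_eb]
  rcases i with n | n | n
  · show ((n - 0 : ℤ) : F) • Lb F (0 + n) = _
    rw [zero_add, sub_zero]
    show ((n : ℤ) : F) • eb F (Li n) = _
    congr 1
    show ((n : ℤ) : F) = ((2 * n : ℤ) : F) / 2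
    push_cast
    ring
  · show (((2*n + 1 - 0 : ℤ) : F) / 2) • Yb F (0 + n) = _
    rw [zero_add, sub_zero]
    show (((2*n + 1 : ℤ) : F)/2) • eb F (Yi n) = _
    congr 1
  · show ((n : ℤ) : F) • Mb F (0 + n) = _
    rw [zero_add]
    show ((n : ℤ) : F) • eb F (Mi n) = _
    congr 1
    show ((n : ℤ) : F) = ((2 * n : ℤ) : F) / 2
    push_cast
    ring

lemma bk_eb_L0 (i : SVIx) : bk F (eb F i) (Lb F 0) = (-(((deg2 i : ℤ) : F))/2) • eb F i := by
  have hL : Lb F 0 = eb F (Li 0) := rfl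
  rw [hL, bk_eb]
  rcases i with n | n | n
  · show ((0 - n : ℤ) : F) • Lb F (n + 0) = _
    rw [add_zero, zero_sub]
    show ((-n : ℤ) : F) • eb F (Li n) = _
    congr 1
    show ((-n : ℤ) : F) = -((2 * n : ℤ) : F) / 2
    push_cast
    ring
  · show -((((2*n + 1 - 0 : ℤ) : F) / 2) • Yb F (0 + n)) = _
    rw [zero_add, sub_zero, ← neg_smul]
    show (-(((2*n + 1 : ℤ) : F)/2)) • eb F (Yi n) = _
    congr 1
    simp only [deg2]
    push_cast
    ring
  · show -(((n : ℤ) : F) • Mb F (0 + n)) = _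
    rw [zero_add, ← neg_smul]
    show (-((n : ℤ) : F)) • eb F (Mi n) = _
    congr 1
    show -((n : ℤ) : F) = -((2 * n : ℤ) : F) / 2
    push_cast
    ring

lemma eigen (d : ℤ) (v : VV F) (h : projV F d v = v) :
    adVb F (Lb F 0) v = (((d : ℤ) : F)/2) • v := by
  have hs := proj_support F d v h
  conv_lhs => rw [repr_eq F v]
  conv_rhs => rw [repr_eq F v]
  rw [lin_sum, Finsupp.smul_sum]
  refine Finsupp.sum_congr fun pq hpq => ?_
  have hd : deg2 pq.1 + deg2 pq.2 = d := by
    by_contra hc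
    exact (Finsupp.mem_support_iff.mp hpq) (hs pq hc)
  rw [LinearMap.map_smul, adVb_tmul, bk_L0, bk_L0]
  have e1 : ((((deg2 pq.1 : ℤ) : F)/2) • eb F pq.1) ⊗ₜ[F] eb F pq.2
      = (((deg2 pq.1 : ℤ) : F)/2) • (eb F pq.1 ⊗ₜ[F] eb F pq.2) := (smul_tmul' _ _ _).symm
  have e2 : eb F pq.1 ⊗ₜ[F] ((((deg2 pq.2 : ℤ) : F)/2) • eb F pq.2)
      = (((deg2 pq.2 : ℤ) : F)/2) • (eb F pq.1 ⊗ₜ[F] eb F pq.2) := tmul_smul _ _ _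
  rw [e1, e2, ← add_smul, smul_smul, smul_smul]
  congr 1
  have hdF : ((deg2 pq.1 : ℤ) : F) + ((deg2 pq.2 : ℤ) : F) = ((d : ℤ) : F) := by
    exact_mod_cast congrArg (fun z : ℤ => (z : F)) hd
  field_simp
  linear_combination ((toF2 F) v) pq * hdF


/-- A degree-zero derivation `D : L → L ⊗ L` satisfies `D(L₀) ∈ F • (M₀ ⊗ M₀)`. -/
theorem sv_degree_zero_derivation_L0 :
    ∀ D : SVL F →ₗ[F] VV F, IsDer F D → homDer F 0 D →
      ∃ c : F, D (Lb F 0) = c • (Mb F 0 ⊗ₜ[F] Mb F 0) := by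
  intro D hder hhom
  have homL_eb : ∀ i : SVIx, homL F (deg2 i) (eb F i) := by
    intro i j hj
    have hj' := Finsupp.support_single_subset hj
    simp only [Finset.mem_singleton] at hj'
    subst hj'
    rfl
  have hw0 : projV F 0 (D (Lb F 0)) = D (Lb F 0) := by
    have h0 : homL F 0 (Lb F 0) := homL_eb (Li 0)
    simpa using hhom 0 (Lb F 0) h0
  have hDx : ∀ i : SVIx, projV F (deg2 i) (D (eb F i)) = D (eb F i) := by
    intro i
    simpa using hhom (deg2 i) (eb F i) (homL_eb i)
  have hinv : ∀ i : SVIx, adVb F (eb F i) (D (Lb F 0)) = 0 := by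
    intro i
    have key := hder (eb F i) (Lb F 0)
    rw [bk_eb_L0 F i, LinearMap.map_smul, eigen F (deg2 i) (D (eb F i)) (hDx i)] at key
    have key2 := sub_eq_iff_eq_add.mp key.symm
    rw [key2, ← add_smul]
    have hz : (-((deg2 i : ℤ) : F))/2 + ((deg2 i : ℤ) : F)/2 = 0 := by ring
    rw [hz]; exact zero_smul _ _
  set c : SVIx × SVIx →₀ F := toF2 F (D (Lb F 0)) with hc
  have hmast : ∀ i p q : SVIx, (c.sum fun ab r => r * ((brIx F i ab.1) p * (eb F ab.2) q))
      + (c.sum fun ab r => r * ((eb F ab.1) p * (brIx F i ab.2) q)) = 0 :=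
    fun i p q => master F (D (Lb F 0)) i (hinv i) p q
  have hpar : ∀ pq : SVIx × SVIx, deg2 pq.1 + deg2 pq.2 ≠ 0 → c pq = 0 :=
    fun pq h => proj_support F 0 (D (Lb F 0)) hw0 pq h
  have hLL : ∀ m n : ℤ, c (Li m, Li n) = 0 := fun m n => eqLL F c hmast m n
  have hLM : ∀ m n : ℤ, c (Li m, Mi n) = 0 := by
    intro m n
    have hvan := finsupp_vanish F c (fun k => (Mi (m+k), Li (n-k))) ?_ (- c (Li m, Mi n)) ?_
    · linear_combination -hvan
    · intro k1 k2 hk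
      simp only [Prod.mk.injEq, Sum.inr.injEq, Sum.inl.injEq] at hk
      omega
    · intro k hk
      have h1 := eqLM F c hmast k m (n - k) hk
      have e : n - k + k = n := by ring
      rw [e] at h1
      linear_combination h1
  have hML : ∀ m n : ℤ, c (Mi m, Li n) = 0 := by
    intro m n
    have h1 := eqLM F c hmast 1 (m-1) n one_ne_zero
    have e : m - 1 + 1 = m := by ring
    rw [e] at h1
    linear_combination h1 - hLM (m-1) (n+1)
  have hYY : ∀ a b : ℤ, c (Yi a, Yi b) = 0 := by
    intro a b
    have h1 := eqYY F c hmast (a-1) a (b - (a-1))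
    have e : b - (a-1) + (a-1) = b := by ring
    rw [e] at h1
    have h2 := hML ((a-1)+a+1) (b-(a-1))
    rw [h2] at h1
    have e2 : ((a - (a-1) : ℤ) : F) = 1 := by push_cast; ring
    rw [e2] at h1
    linear_combination h1
  have hMM : ∀ a b : ℤ, ¬(a = 0 ∧ b = 0) → c (Mi a, Mi b) = 0 := by
    intro a b hab
    rcases eq_or_ne a 0 with rfl | ha
    · rcases eq_or_ne b 0 with rfl | hb
      · exact absurd ⟨rfl, rfl⟩ hab
      · have h1 := eqMM F c hmast 0 0 b
        simp only [zero_add, Int.cast_zero, zero_mul, add_zero] at h1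
        rcases mul_eq_zero.mp (by linear_combination h1 :
            ((b : ℤ) : F) * c (Mi 0, Mi b) = 0) with h2 | h2
        · exact absurd h2 (Int.cast_ne_zero.mpr hb)
        · exact h2
    · have h1 := eqMM F c hmast b a 0
      simp only [add_zero, Int.cast_zero, zero_mul] at h1
      rcases mul_eq_zero.mp h1 with h2 | h2
      · exact absurd h2 (Int.cast_ne_zero.mpr ha)
      · exact h2
  have hsingle : c = Finsupp.single ((Mi 0, Mi 0) : SVIx × SVIx) (c (Mi 0, Mi 0)) := by
    ext pq
    rcases eq_or_ne pq ((Mi 0, Mi 0) : SVIx × SVIx) with rfl | hne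
    · rw [Finsupp.single_eq_same]
    · rw [Finsupp.single_eq_of_ne' (Ne.symm hne)]
      obtain ⟨a, b⟩ := pq
      rcases a with m | m | m <;> rcases b with n | n | n
      · exact hLL m n
      · refine hpar _ ?_
        simp only [deg2]
        omega
      · exact hLM m n
      · refine hpar _ ?_
        simp only [deg2]
        omega
      · exact hYY m n
      · refine hpar _ ?_
        simp only [deg2]
        omega
      · exact hML m n
      · refine hpar _ ?_
        simp only [deg2]
        omega
      · refine hMM m n ?_
        rintro ⟨rfl, rfl⟩
        exact hne rfl
  refine ⟨c ((Mi 0, Mi 0) : SVIx × SVIx), ?_⟩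
  have hback : D (Lb F 0) = (toF2 F).symm c := (LinearEquiv.symm_apply_apply _ _).symm
  rw [hback]
  nth_rewrite 1 [hsingle]
  have hsym := finsuppTensorFinsupp'_symm_single_mul F SVIx SVIx
    ((Mi 0, Mi 0) : SVIx × SVIx) (c ((Mi 0, Mi 0) : SVIx × SVIx)) 1
  rw [mul_one] at hsym
  have : (toF2 F).symm (Finsupp.single ((Mi 0, Mi 0) : SVIx × SVIx) (c ((Mi 0, Mi 0) : SVIx × SVIx)))
      = Finsupp.single (Mi 0) (c ((Mi 0, Mi 0) : SVIx × SVIx)) ⊗ₜ[F] Finsupp.single (Mi 0) (1:F) := hsym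
  rw [this]
  have hs1 : (Finsupp.single (Mi 0) (c ((Mi 0, Mi 0) : SVIx × SVIx)) : SVL F)
      = c ((Mi 0, Mi 0) : SVIx × SVIx) • Mb F 0 := by
    rw [Mb, Finsupp.smul_single', mul_one]
  rw [hs1, smul_tmul']
  rfl
end
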